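/- Let X be a real Banach space, (Y,d) a complete metric space, and F : X ⇉ Y a set-valued map with closed values. For y ∈ Y set ψ_y(x) = d(y, F(x)) and assume each ψ_y is lower semicontinuous on X. Let (x̄,ȳ) ∈ Gr F and K > 0, and suppose there exists r > 0 such that for every x with ‖x−x̄‖ ≤ r and every y with d(y,ȳ) ≤ r satisfying y ∉ F(x), the function ψ_y is quasidifferentiable at x with quasidifferential [∂̲ψ_y(x), ∂̄ψ_y(x)] and there exists w* ∈ ∂̄ψ_y(x) such that inf{‖v* + w*‖_{X*} : v* ∈ ∂̲ψ_y(x)} > 1/K. Then for every such pair (x,y) with K·d(y,F(x)) < r − ‖x−x̄‖ one has d(x, F⁻¹(y)) ≤ K·d(y, F(x)); in particular, F is metrically regular near (x̄,ȳ) with norm of metric regularity not exceeding K. -/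

import Mathlib

open Filter Topology Set Pointwise

/-- Dini directional differentiability of `f` at `x` with directional derivative `f'`. -/
def HasDiniDeriv {X : Type*} [NormedAddCommGroup X] [NormedSpace ℝ X]
    (f : X → ℝ) (x : X) (f' : X → ℝ) : Prop :=
  ∀ h : X, Tendsto (fun t : ℝ => (f (x + t • h) - f x) / t) (𝓝[>] (0 : ℝ)) (𝓝 (f' h))

/-- A set of continuous linear functionals is weak* compact. -/
def WeakStarCompact {X : Type*} [NormedAddCommGroup X] [NormedSpace ℝ X]
    (A : Set (X →L[ℝ] ℝ)) : Prop :=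
  IsCompact ((fun v : X →L[ℝ] ℝ => (StrongDual.toWeakDual v : WeakDual ℝ X)) '' A)

/-- `[A, B]` is a quasidifferential of `f` at `x`, with Dini directional derivative `f'`. -/
def IsQuasidiff {X : Type*} [NormedAddCommGroup X] [NormedSpace ℝ X]
    (f : X → ℝ) (x : X) (f' : X → ℝ) (A B : Set (X →L[ℝ] ℝ)) : Prop :=
  A.Nonempty ∧ B.Nonempty ∧ Convex ℝ A ∧ Convex ℝ B ∧
    WeakStarCompact A ∧ WeakStarCompact B ∧ HasDiniDeriv f x f' ∧
    ∀ h : X, f' h = sSup ((fun v => v h) '' A) + sInf ((fun w => w h) '' B)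

/-- `F` is metrically regular near `(xb, yb)` with norm of metric regularity not exceeding `K`:
`d(x, F⁻¹(y)) ≤ K · d(y, F(x))` for all `x, y` in balls of some radius `r > 0` around `xb, yb`
(distances to sets are taken in `ℝ≥0∞`, so that `d(·, ∅) = +∞`). -/
def MetricallyRegularWithNorm {X : Type*} [NormedAddCommGroup X] [NormedSpace ℝ X]
    {Y : Type*} [MetricSpace Y] (F : X → Set Y) (xb : X) (yb : Y) (K : ℝ) : Prop :=
  ∃ r > (0 : ℝ), ∀ x : X, ‖x - xb‖ ≤ r → ∀ y : Y, dist y yb ≤ r →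
    EMetric.infEdist x {x' : X | y ∈ F x'} ≤ ENNReal.ofReal K * EMetric.infEdist y (F x)

section AuxEkeland

open ENNReal EMetric

theorem ekeland_enn {α : Type*} [MetricSpace α] [CompleteSpace α]
    {f : α → ℝ≥0∞} (hf : LowerSemicontinuous f) {ε : ℝ≥0∞} (hε0 : ε ≠ 0) (hεtop : ε ≠ ⊤)
    (x₀ : α) (hx₀ : f x₀ ≠ ⊤) :
    ∃ z, f z + ε * edist z x₀ ≤ f x₀ ∧ ∀ u, f z ≤ f u + ε * edist u z := by
  set S : α → Set α := fun v => {u | f u + ε * edist u v ≤ f v} with hS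
  have hSmem : ∀ v, v ∈ S v := by intro v; simp [hS]
  have hSle : ∀ {v u}, u ∈ S v → f u ≤ f v := fun {v u} h =>
    le_trans (le_add_right le_rfl) h
  have hStrans : ∀ {v u}, u ∈ S v → S u ⊆ S v := by
    intro v u huv w hwv
    have h1 : f w + ε * edist w u ≤ f u := hwv
    calc f w + ε * edist w v ≤ f w + ε * (edist w u + edist u v) := by
          gcongr; exact edist_triangle _ _ _
      _ = (f w + ε * edist w u) + ε * edist u v := by ring
      _ ≤ f u + ε * edist u v := by gcongr
      _ ≤ f v := huv
  have hSclosed : ∀ v, IsClosed (S v) := by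
    intro v
    have : LowerSemicontinuous fun u => f u + ε * edist u v :=
      hf.add (((ENNReal.continuous_const_mul hεtop).comp
        (continuous_id.edist continuous_const)).lowerSemicontinuous)
    exact this.isClosed_preimage (f v)
  set δ : ℕ → ℝ≥0∞ := fun n => 2⁻¹ ^ n with hδ
  have hδ0 : ∀ n, δ n ≠ 0 := by
    intro n
    simp [hδ, pow_ne_zero]
  have step : ∀ (n : ℕ) (v : {v : α // f v ≤ f x₀}),
      ∃ u : {v : α // f v ≤ f x₀}, u.1 ∈ S v.1 ∧
        f u.1 < (⨅ w : S v.1, f w.1) + δ n := by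
    intro n v
    have hB : (⨅ w : S v.1, f w.1) ≠ ⊤ :=
      ((le_trans (iInf_le _ ⟨v.1, hSmem v.1⟩) v.2).trans_lt (lt_top_iff_ne_top.2 hx₀)).ne
    have : (⨅ w : S v.1, f w.1) < (⨅ w : S v.1, f w.1) + δ n :=
      ENNReal.lt_add_right hB (hδ0 n)
    obtain ⟨⟨u, hu⟩, hu2⟩ := iInf_lt_iff.1 this
    exact ⟨⟨u, (hSle hu).trans v.2⟩, hu, hu2⟩
  choose next hnext1 hnext2 using step
  set x : ℕ → {v : α // f v ≤ f x₀} := fun n => Nat.rec ⟨x₀, le_rfl⟩ next n with hx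
  have hxs : ∀ n, x (n + 1) = next n (x n) := fun n => rfl
  have hmem : ∀ n, (x (n + 1)).1 ∈ S (x n).1 := fun n => hnext1 n (x n)
  have hchain : ∀ n k, (x (n + k)).1 ∈ S (x n).1 := by
    intro n k
    induction k with
    | zero => exact hSmem _
    | succ k ih => exact hStrans ih (hmem (n + k))
  have hchain' : ∀ {n m}, n ≤ m → (x m).1 ∈ S (x n).1 := by
    intro n m h; obtain ⟨k, rfl⟩ := Nat.exists_eq_add_of_le h; exact hchain n k
  have hftop : ∀ n, f (x n).1 ≠ ⊤ := fun n => ((x n).2.trans_lt (lt_top_iff_ne_top.2 hx₀)).ne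
  set E : ℕ → ℝ≥0∞ := fun n => Nat.rec (f x₀) (fun k _ => δ k) n with hE
  have hd : ∀ n, edist (x n).1 (x (n+1)).1 ≤ ε⁻¹ * E n := by
    intro n
    have key : ∀ c : ℝ≥0∞, ε * edist (x (n+1)).1 (x n).1 ≤ c →
        edist (x n).1 (x (n+1)).1 ≤ ε⁻¹ * c := by
      intro c hc
      rw [edist_comm]
      calc edist (x (n+1)).1 (x n).1 = ε⁻¹ * (ε * edist (x (n+1)).1 (x n).1) := by
            rw [← mul_assoc, ENNReal.inv_mul_cancel hε0 hεtop, one_mul]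
        _ ≤ ε⁻¹ * c := by gcongr
    cases n with
    | zero =>
      refine key _ ?_
      have h1 : f (x 1).1 + ε * edist (x 1).1 (x 0).1 ≤ f (x 0).1 := hmem 0
      exact le_trans (le_add_left le_rfl) (h1.trans (x 0).2)
    | succ m =>
      refine key _ ?_
      have hu : (x (m+2)).1 ∈ S (x m).1 := hchain m 2
      have h1 : f (x (m+2)).1 + ε * edist (x (m+2)).1 (x (m+1)).1 ≤ f (x (m+1)).1 := hmem (m+1)
      have h2 : f (x (m+1)).1 < (⨅ w : S (x m).1, f w.1) + δ m := hnext2 m (x m)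
      have h3 : (⨅ w : S (x m).1, f w.1) ≤ f (x (m+2)).1 := iInf_le (fun w : S (x m).1 => f w.1) ⟨_, hu⟩
      have h4 : f (x (m+2)).1 + ε * edist (x (m+2)).1 (x (m+1)).1 <
          f (x (m+2)).1 + δ m := h1.trans_lt (h2.trans_le (by gcongr))
      exact ((ENNReal.add_lt_add_iff_left (hftop (m+2))).1 h4).le
  have hcauchy : CauchySeq fun n => (x n).1 := by
    refine cauchySeq_of_edist_le_of_tsum_ne_top (fun n => ε⁻¹ * E n) hd ?_
    rw [ENNReal.tsum_mul_left]
    refine ENNReal.mul_ne_top (ENNReal.inv_ne_top.2 hε0) ?_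
    have : ∑' n, E n = f x₀ + ∑' n, δ n := tsum_eq_zero_add' (by simpa using ENNReal.summable)
    rw [this]
    refine ENNReal.add_ne_top.2 ⟨hx₀, ?_⟩
    rw [hδ, ENNReal.tsum_geometric]
    simp [ENNReal.sub_ne_top]
  obtain ⟨z, hz⟩ := cauchySeq_tendsto_of_complete hcauchy
  have hzS : ∀ n, z ∈ S (x n).1 := by
    intro n
    refine (hSclosed (x n).1).mem_of_tendsto hz ?_
    filter_upwards [eventually_ge_atTop n] with m hm using hchain' hm
  have hzfin : f z ≤ f x₀ := hSle (hzS 0)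
  refine ⟨z, hzS 0, ?_⟩
  have claim : ∀ u, u ∈ S z → f z ≤ f u := by
    intro u hu
    have huS : ∀ n, u ∈ S (x n).1 := fun n => hStrans (hzS n) hu
    have hfu : f u ≠ ⊤ := ((hSle hu).trans hzfin).trans_lt (lt_top_iff_ne_top.2 hx₀) |>.ne
    by_contra hlt
    push_neg at hlt
    obtain ⟨n, hn⟩ := ENNReal.exists_inv_two_pow_lt (a := f z - f u)
      (by simpa [tsub_eq_zero_iff_le] using not_le.2 hlt)
    have h1 : f z ≤ f (x (n+1)).1 := hSle (hzS (n+1))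
    have h2 : f (x (n+1)).1 < (⨅ w : S (x n).1, f w.1) + δ n := hnext2 n (x n)
    have h3 : (⨅ w : S (x n).1, f w.1) ≤ f u := iInf_le (fun w : S (x n).1 => f w.1) ⟨u, huS n⟩
    have h4 : f z < f u + δ n := h1.trans_lt (h2.trans_le (by gcongr))
    have h5 : f u + δ n < f u + (f z - f u) := by
      rw [ENNReal.add_lt_add_iff_left hfu]; exact hn
    rw [add_tsub_cancel_of_le hlt.le] at h5
    exact absurd (h4.trans h5) (lt_irrefl _)
  intro u
  by_cases h : f u + ε * edist u z ≤ f z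
  · exact le_trans (claim u h) (le_add_right le_rfl)
  · exact (not_le.1 h).le

end AuxEkeland

section AuxWeakDual

open NormedSpace

theorem weakdual_eval {X : Type*} [NormedAddCommGroup X] [NormedSpace ℝ X]
    (φ : WeakDual ℝ X →L[ℝ] ℝ) :
    ∃ h : X, ∀ v : WeakDual ℝ X, φ v = v h := by
  -- continuity at 0 in the weak-* topology
  have hcont : φ ⁻¹' (Set.Ioo (-1 : ℝ) 1) ∈ 𝓝 (0 : WeakDual ℝ X) := by
    refine φ.continuous.continuousAt.preimage_mem_nhds ?_
    simp only [map_zero]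
    exact Ioo_mem_nhds (by norm_num) (by norm_num)
  -- the topology is induced from the product topology
  rw [show (𝓝 (0 : WeakDual ℝ X)) = Filter.comap (fun (x : WeakDual ℝ X) y => (topDualPairing ℝ X) x y)
      (𝓝 (fun y => (topDualPairing ℝ X) 0 y)) from nhds_induced _ _, Filter.mem_comap] at hcont
  obtain ⟨N, hN, hNsub⟩ := hcont
  rw [show (fun y => ((topDualPairing ℝ X) 0) y) = (0 : X → ℝ) by ext x; simp,
    nhds_pi, Filter.mem_pi] at hN
  obtain ⟨I, hIfin, t, ht, htsub⟩ := hN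
  -- functionals vanishing on I are in ker φ
  have hker : ∀ v : WeakDual ℝ X, (∀ x ∈ I, v x = 0) → φ v = 0 := by
    intro v hv
    by_contra hφv
    have habs : ∀ c : ℝ, φ (c • v) ∈ Set.Ioo (-1 : ℝ) 1 := by
      intro c
      apply hNsub
      apply htsub
      intro x hx
      simp only [map_smul, topDualPairing_apply, hv x hx, smul_eq_mul, mul_zero,
        LinearMap.smul_apply]
      show c * v x ∈ t x
      rw [hv x hx, mul_zero]
      exact mem_of_mem_nhds (ht x)
    have := (habs (2 / φ v)).2
    rw [map_smul] at this
    simp only [smul_eq_mul] at this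
    rw [div_mul_cancel₀ _ hφv] at this
    norm_num at this
  haveI := hIfin.fintype
  let L : I → (WeakDual ℝ X) →ₗ[ℝ] ℝ := fun x =>
    { toFun := fun v => v (x : X)
      map_add' := fun a b => rfl
      map_smul' := fun c a => rfl }
  have hker' : ⨅ x : I, LinearMap.ker (L x) ≤ LinearMap.ker (φ : WeakDual ℝ X →ₗ[ℝ] ℝ) := by
    intro v hv
    simp only [Submodule.mem_iInf, LinearMap.mem_ker] at hv ⊢
    exact hker v fun x hx => hv ⟨x, hx⟩
  obtain ⟨c, hc⟩ := (Submodule.mem_span_range_iff_exists_fun ℝ).1 (mem_span_of_iInf_ker_le_ker hker')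
  refine ⟨∑ i : I, c i • (i : X), fun v => ?_⟩
  have h1 : φ v = (∑ i : I, c i • L i) v := by rw [hc]; rfl
  rw [h1]
  simp only [LinearMap.sum_apply, LinearMap.smul_apply, smul_eq_mul]
  rw [map_sum]
  refine Finset.sum_congr rfl fun i _ => ?_
  rw [map_smul]
  rfl

theorem weakstar_separation {X : Type*} [NormedAddCommGroup X] [NormedSpace ℝ X]
    {C : Set (X →L[ℝ] ℝ)} (hCne : C.Nonempty) (hCconv : Convex ℝ C)
    (hCcomp : IsCompact
      ((fun v : X →L[ℝ] ℝ => (StrongDual.toWeakDual v : WeakDual ℝ X)) '' C))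
    {ρ : ℝ} (hρ : 0 < ρ) (hC : ∀ c ∈ C, ρ < ‖c‖) :
    ∃ h : X, h ≠ 0 ∧ ∃ s : ℝ, (∀ c ∈ C, c h ≤ s) ∧ s < -ρ * ‖h‖ := by
  haveI : LocallyConvexSpace ℝ (WeakDual ℝ X) := WeakBilin.locallyConvexSpace
  set Cw : Set (WeakDual ℝ X) :=
    (fun v : X →L[ℝ] ℝ => (StrongDual.toWeakDual v : WeakDual ℝ X)) '' C with hCw
  set Dw : Set (WeakDual ℝ X) := (WeakDual.toStrongDual (𝕜 := ℝ) (E := X)) ⁻¹' Metric.closedBall (0 : StrongDual ℝ X) ρ with hDw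
  have hCwconv : Convex ℝ Cw := hCconv.linear_image (StrongDual.toWeakDual (𝕜 := ℝ) (E := X)).toLinearMap
  have hDwcomp : IsCompact Dw := WeakDual.isCompact_closedBall (0 : StrongDual ℝ X) ρ
  have hDwclosed : IsClosed Dw := hDwcomp.isClosed
  have hDwconv : Convex ℝ Dw :=
    (convex_closedBall (0 : StrongDual ℝ X) ρ).linear_preimage (WeakDual.toStrongDual (𝕜 := ℝ) (E := X)).toLinearMap
  have hdisj : Disjoint Cw Dw := by
    rw [Set.disjoint_left]
    rintro a ⟨c, hc, rfl⟩ hD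
    have h1 : ‖c‖ ≤ ρ := by
      simpa [hDw, Metric.mem_closedBall] using hD
    exact absurd (hC c hc) (not_lt.2 h1)
  obtain ⟨φ, u, v, hu, huv, hv⟩ :=
    geometric_hahn_banach_compact_closed hCwconv hCcomp hDwconv hDwclosed hdisj
  obtain ⟨h, hh⟩ := weakdual_eval φ
  obtain ⟨c₀, hc₀⟩ := hCne
  have h0D : (0 : WeakDual ℝ X) ∈ Dw := by
    show WeakDual.toStrongDual (0 : WeakDual ℝ X) ∈ Metric.closedBall (0 : StrongDual ℝ X) ρ
    rw [map_zero]
    exact Metric.mem_closedBall_self hρ.le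
  have hφ0 : φ 0 = 0 := map_zero φ
  have hne : h ≠ 0 := by
    rintro rfl
    have h1 := hu _ ⟨c₀, hc₀, rfl⟩
    rw [hh] at h1
    have h2 : (StrongDual.toWeakDual c₀ : WeakDual ℝ X) (0 : X) = 0 := map_zero _
    rw [h2] at h1
    have h3 := hv 0 h0D
    rw [hφ0] at h3
    linarith
  obtain ⟨g, hg1, hg2⟩ := exists_dual_vector ℝ h (norm_ne_zero_iff.2 hne)
  have hg2' : g h = ‖h‖ := by exact_mod_cast hg2
  have hbD : (StrongDual.toWeakDual (-(ρ • g)) : WeakDual ℝ X) ∈ Dw := by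
    simp only [hDw, Set.mem_preimage, Metric.mem_closedBall, dist_zero_right]
    rw [show WeakDual.toStrongDual (StrongDual.toWeakDual (-(ρ • g))) = -(ρ • g) from rfl]
    rw [norm_neg, norm_smul, Real.norm_eq_abs, abs_of_pos hρ, hg1, mul_one]
  have hb : v < -(ρ * ‖h‖) := by
    have h1 := hv _ hbD
    rw [hh] at h1
    have h2 : (StrongDual.toWeakDual (-(ρ • g)) : WeakDual ℝ X) h = -(ρ * ‖h‖) := by
      show (-(ρ • g) : X →L[ℝ] ℝ) h = -(ρ * ‖h‖)
      simp [hg2']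
    rwa [h2] at h1
  refine ⟨h, hne, u, fun c hc => ?_, ?_⟩
  · have h1 := (hu _ ⟨c, hc, rfl⟩).le
    rw [hh] at h1
    exact h1
  · calc u < v := huv
      _ < -(ρ * ‖h‖) := hb
      _ = -ρ * ‖h‖ := by ring

end AuxWeakDual

/-- sufficient condition for metric regularity of a closed-valued multifunction
in terms of quasidifferentials of the distance functions `ψ_y = d(y, F(·))`. -/
theorem metric_regularity_of_quasidiff_condition
    {X : Type*} [NormedAddCommGroup X] [NormedSpace ℝ X] [CompleteSpace X]
    {Y : Type*} [MetricSpace Y] [CompleteSpace Y]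
    (F : X → Set Y) (hFclosed : ∀ x : X, IsClosed (F x))
    (hlsc : ∀ y : Y, LowerSemicontinuous (fun u : X => EMetric.infEdist y (F u)))
    (xb : X) (yb : Y) (hgraph : yb ∈ F xb)
    (K : ℝ) (hK : 0 < K) (r : ℝ) (hr : 0 < r)
    (hmain : ∀ x : X, ‖x - xb‖ ≤ r → ∀ y : Y, dist y yb ≤ r → y ∉ F x →
      ∃ (ψ' : X → ℝ) (A B : Set (X →L[ℝ] ℝ)),
        IsQuasidiff (fun u : X => (EMetric.infEdist y (F u)).toReal) x ψ' A B ∧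
        ∃ w ∈ B, 1 / K < sInf ((fun v => ‖v + w‖) '' A)) :
    (∀ x : X, ‖x - xb‖ ≤ r → ∀ y : Y, dist y yb ≤ r →
      ENNReal.ofReal K * EMetric.infEdist y (F x) < ENNReal.ofReal (r - ‖x - xb‖) →
      EMetric.infEdist x {x' : X | y ∈ F x'} ≤ ENNReal.ofReal K * EMetric.infEdist y (F x)) ∧
    MetricallyRegularWithNorm F xb yb K := by
  have key : ∀ x : X, ‖x - xb‖ ≤ r → ∀ y : Y, dist y yb ≤ r →
      ENNReal.ofReal K * EMetric.infEdist y (F x) < ENNReal.ofReal (r - ‖x - xb‖) →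
      EMetric.infEdist x {x' : X | y ∈ F x'} ≤ ENNReal.ofReal K * EMetric.infEdist y (F x) := by
    intro x₀ hx₀ y hy hlt
    by_cases hy0 : y ∈ F x₀
    · rw [show EMetric.infEdist x₀ {x' : X | y ∈ F x'} = 0 from
        EMetric.infEdist_zero_of_mem (show x₀ ∈ {x' : X | y ∈ F x'} from hy0)]
      exact zero_le
    have hψtop : EMetric.infEdist y (F x₀) ≠ ⊤ := by
      intro htop
      rw [htop, ENNReal.mul_top (ENNReal.ofReal_pos.2 hK).ne'] at hlt
      exact (not_top_lt hlt).elim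
    have hψ0 : EMetric.infEdist y (F x₀) ≠ 0 := fun h0 =>
      hy0 ((EMetric.mem_iff_infEdist_zero_of_closed (hFclosed x₀)).2 h0)
    set d : ℝ := (EMetric.infEdist y (F x₀)).toReal with hd
    have hd0 : 0 < d := ENNReal.toReal_pos hψ0 hψtop
    have hψx₀ : EMetric.infEdist y (F x₀) = ENNReal.ofReal d :=
      (ENNReal.ofReal_toReal hψtop).symm
    have hKd : K * d < r - ‖x₀ - xb‖ := by
      rw [hψx₀, ← ENNReal.ofReal_mul hK.le] at hlt
      exact (ENNReal.ofReal_lt_ofReal_iff_of_nonneg (by positivity)).1 hlt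
    suffices H : ∀ K' : ℝ, K < K' → K' * d ≤ r - ‖x₀ - xb‖ →
        EMetric.infEdist x₀ {x' : X | y ∈ F x'} ≤ ENNReal.ofReal (K' * d) by
      rw [hψx₀, ← ENNReal.ofReal_mul hK.le]
      refine ENNReal.le_of_forall_pos_le_add fun ε hε _ => ?_
      set m : ℝ := min ((ε : ℝ) / (2 * d)) ((r - ‖x₀ - xb‖ - K * d) / (2 * d)) with hm
      have hm0 : 0 < m := lt_min (by positivity) (div_pos (by linarith) (by positivity))
      have h1 : (K + m) * d ≤ r - ‖x₀ - xb‖ := by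
        have : m * d ≤ (r - ‖x₀ - xb‖ - K * d) / 2 := by
          calc m * d ≤ ((r - ‖x₀ - xb‖ - K * d) / (2 * d)) * d := by
                exact mul_le_mul_of_nonneg_right (min_le_right _ _) hd0.le
            _ = (r - ‖x₀ - xb‖ - K * d) / 2 := by field_simp
        nlinarith
      have h2 : (K + m) * d ≤ K * d + (ε : ℝ) := by
        have : m * d ≤ (ε : ℝ) / 2 := by
          calc m * d ≤ ((ε : ℝ) / (2 * d)) * d := by
                exact mul_le_mul_of_nonneg_right (min_le_left _ _) hd0.le
            _ = (ε : ℝ) / 2 := by field_simp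
        nlinarith [hε]
      calc EMetric.infEdist x₀ {x' : X | y ∈ F x'} ≤ ENNReal.ofReal ((K + m) * d) :=
            H (K + m) (by linarith) h1
        _ ≤ ENNReal.ofReal (K * d + (ε : ℝ)) := ENNReal.ofReal_le_ofReal h2
        _ = ENNReal.ofReal (K * d) + ENNReal.ofReal (ε : ℝ) :=
            ENNReal.ofReal_add (by positivity) (by positivity)
        _ = ENNReal.ofReal (K * d) + (ε : ENNReal) := by rw [ENNReal.ofReal_coe_nnreal]
    intro K' hKK' hK'd
    have hK'0 : 0 < K' := hK.trans hKK'
    obtain ⟨z, hz1, hz2⟩ := ekeland_enn (hlsc y)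
      (ε := ENNReal.ofReal (1 / K')) (ENNReal.ofReal_pos.2 (by positivity)).ne'
      ENNReal.ofReal_ne_top x₀ hψtop
    have hzd : edist z x₀ ≤ ENNReal.ofReal (K' * d) := by
      have h1 : ENNReal.ofReal (1 / K') * edist z x₀ ≤ ENNReal.ofReal d :=
        le_trans (le_add_left le_rfl) (by rwa [hψx₀] at hz1)
      calc edist z x₀ = ENNReal.ofReal K' * (ENNReal.ofReal (1 / K') * edist z x₀) := by
            rw [← mul_assoc, ← ENNReal.ofReal_mul hK'0.le, mul_one_div_cancel hK'0.ne',
              ENNReal.ofReal_one, one_mul]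
        _ ≤ ENNReal.ofReal K' * ENNReal.ofReal d := by gcongr
        _ = ENNReal.ofReal (K' * d) := (ENNReal.ofReal_mul hK'0.le).symm
    by_cases hzF : y ∈ F z
    · calc EMetric.infEdist x₀ {x' : X | y ∈ F x'} ≤ edist x₀ z :=
            EMetric.infEdist_le_edist_of_mem hzF
        _ ≤ ENNReal.ofReal (K' * d) := by rw [edist_comm]; exact hzd
    exfalso
    have hzx₀ : ‖z - x₀‖ ≤ K' * d := by
      rw [edist_dist, dist_eq_norm] at hzd
      exact (ENNReal.ofReal_le_ofReal_iff (by positivity)).1 hzd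
    have hz_ball : ‖z - xb‖ ≤ r := by
      calc ‖z - xb‖ = ‖(z - x₀) + (x₀ - xb)‖ := by rw [sub_add_sub_cancel]
        _ ≤ ‖z - x₀‖ + ‖x₀ - xb‖ := norm_add_le _ _
        _ ≤ K' * d + ‖x₀ - xb‖ := by linarith
        _ ≤ r := by linarith
    obtain ⟨ψ', A, B, ⟨hAne, hBne, hAconv, hBconv, hAcomp, hBcomp, hdini, hsum⟩, w, hwB, hw⟩ :=
      hmain z hz_ball y hy hzF
    have hψzle : EMetric.infEdist y (F z) ≤ EMetric.infEdist y (F x₀) :=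
      le_trans (le_add_right le_rfl) hz1
    have hψztop : EMetric.infEdist y (F z) ≠ ⊤ := (hψzle.trans_lt hψtop.lt_top).ne
    have hψz0 : EMetric.infEdist y (F z) ≠ 0 := fun h0 =>
      hzF ((EMetric.mem_iff_infEdist_zero_of_closed (hFclosed z)).2 h0)
    have hgz : 0 < (EMetric.infEdist y (F z)).toReal := ENNReal.toReal_pos hψz0 hψztop
    -- lower bound on the Dini derivative
    have hlow : ∀ h : X, -(1 / K') * ‖h‖ ≤ ψ' h := by
      intro h
      refine ge_of_tendsto (hdini h) ?_
      set M : ℝ := max (1 - ψ' h) 1 with hM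
      have hMpos : 0 < M := lt_of_lt_of_le one_pos (le_max_right _ _)
      set δ : ℝ := (EMetric.infEdist y (F z)).toReal / M with hδ
      have hδ0 : 0 < δ := div_pos hgz hMpos
      have hev1 : ∀ᶠ t in 𝓝[>] (0 : ℝ),
          ψ' h - 1 < ((EMetric.infEdist y (F (z + t • h))).toReal
            - (EMetric.infEdist y (F z)).toReal) / t :=
        (hdini h).eventually (eventually_gt_nhds (by linarith))
      have hev2 : Set.Ioo (0 : ℝ) δ ∈ 𝓝[>] (0 : ℝ) :=
        Ioo_mem_nhdsGT_of_mem ⟨le_refl 0, hδ0⟩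
      filter_upwards [hev1, hev2] with t ht1 ht2
      have ht0 : 0 < t := ht2.1
      have hfin : EMetric.infEdist y (F (z + t • h)) ≠ ⊤ := by
        intro htop
        rw [htop, ENNReal.toReal_top] at ht1
        have h1 : M < (EMetric.infEdist y (F z)).toReal / t := by
          rw [lt_div_iff₀ ht0]
          calc M * t < M * δ := by gcongr; exact ht2.2
            _ = (EMetric.infEdist y (F z)).toReal := by
                rw [hδ, mul_div_cancel₀ _ hMpos.ne']
        have h2 : 1 - ψ' h ≤ M := le_max_left _ _
        have h3 : (0 - (EMetric.infEdist y (F z)).toReal) / t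
            = -((EMetric.infEdist y (F z)).toReal / t) := by ring
        rw [h3] at ht1
        linarith
      have hek := hz2 (z + t • h)
      have hed : edist (z + t • h) z = ENNReal.ofReal (t * ‖h‖) := by
        rw [edist_dist, dist_eq_norm, add_sub_cancel_left, norm_smul,
          Real.norm_eq_abs, abs_of_pos ht0]
      rw [hed, ← ENNReal.ofReal_mul (by positivity)] at hek
      have hineq : (EMetric.infEdist y (F z)).toReal ≤
          (EMetric.infEdist y (F (z + t • h))).toReal + 1 / K' * (t * ‖h‖) := by
        have h1 := ENNReal.toReal_mono
          (ENNReal.add_ne_top.2 ⟨hfin, ENNReal.ofReal_ne_top⟩) hek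
        rwa [ENNReal.toReal_add hfin ENNReal.ofReal_ne_top,
          ENNReal.toReal_ofReal (by positivity)] at h1
      rw [le_div_iff₀ ht0]
      nlinarith
    -- compactify evaluation images
    have himA : ∀ h : X, IsCompact ((fun v : X →L[ℝ] ℝ => v h) '' A) := by
      intro h
      have heq : ((fun v : X →L[ℝ] ℝ => v h) '' A) = (fun φ : WeakDual ℝ X => φ h) ''
          ((fun v : X →L[ℝ] ℝ => (StrongDual.toWeakDual v : WeakDual ℝ X)) '' A) := by
        rw [Set.image_image]
        rfl
      rw [heq]
      exact hAcomp.image (WeakDual.eval_continuous h)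
    have himB : ∀ h : X, IsCompact ((fun v : X →L[ℝ] ℝ => v h) '' B) := by
      intro h
      have heq : ((fun v : X →L[ℝ] ℝ => v h) '' B) = (fun φ : WeakDual ℝ X => φ h) ''
          ((fun v : X →L[ℝ] ℝ => (StrongDual.toWeakDual v : WeakDual ℝ X)) '' B) := by
        rw [Set.image_image]
        rfl
      rw [heq]
      exact hBcomp.image (WeakDual.eval_continuous h)
    have hBle : ∀ h : X, sInf ((fun v : X →L[ℝ] ℝ => v h) '' B) ≤ w h := fun h =>
      csInf_le (himB h).bddBelow ⟨w, hwB, rfl⟩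
    -- separation
    set C : Set (X →L[ℝ] ℝ) := (fun v => v + w) '' A with hC
    have hCne : C.Nonempty := hAne.image _
    have hCconv : Convex ℝ C := by
      have himg : C = (fun v => w + v) '' A := by
        rw [hC]
        ext c
        constructor
        · rintro ⟨v, hv, rfl⟩; exact ⟨v, hv, add_comm w v⟩
        · rintro ⟨v, hv, rfl⟩; exact ⟨v, hv, add_comm v w⟩
      rw [himg]
      exact hAconv.translate w
    have hCcomp : IsCompact
        ((fun v : X →L[ℝ] ℝ => (StrongDual.toWeakDual v : WeakDual ℝ X)) '' C) := by
      have heq : ((fun v : X →L[ℝ] ℝ => (StrongDual.toWeakDual v : WeakDual ℝ X)) '' C) =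
          (fun φ : WeakDual ℝ X => φ + StrongDual.toWeakDual w) ''
          ((fun v : X →L[ℝ] ℝ => (StrongDual.toWeakDual v : WeakDual ℝ X)) '' A) := by
        rw [hC, Set.image_image, Set.image_image]
        rfl
      rw [heq]
      exact hAcomp.image (continuous_id.add continuous_const)
    have hρK : (0 : ℝ) < 1 / K' := by positivity
    have hCnorm : ∀ c ∈ C, 1 / K' < ‖c‖ := by
      rintro c ⟨v, hv, rfl⟩
      have h1 : sInf ((fun v : X →L[ℝ] ℝ => ‖v + w‖) '' A) ≤ ‖v + w‖ :=
        csInf_le ⟨0, by rintro _ ⟨u, -, rfl⟩; positivity⟩ ⟨v, hv, rfl⟩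
      have h2 : 1 / K' < 1 / K := by
        apply one_div_lt_one_div_of_lt hK hKK'
      linarith
    obtain ⟨h₀, hne0, s, hs1, hs2⟩ := weakstar_separation hCne hCconv hCcomp hρK hCnorm
    have hub : ∀ val ∈ ((fun v : X →L[ℝ] ℝ => v h₀) '' A), val ≤ s - w h₀ := by
      rintro _ ⟨v, hv, rfl⟩
      have h1 := hs1 (v + w) ⟨v, hv, rfl⟩
      have h2 : (v + w) h₀ = v h₀ + w h₀ := ContinuousLinearMap.add_apply v w h₀
      linarith [h2 ▸ h1]
    have hsupA : sSup ((fun v : X →L[ℝ] ℝ => v h₀) '' A) ≤ s - w h₀ :=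
      csSup_le (hAne.image _) hub
    have hfinal : ψ' h₀ ≤ s := by
      rw [hsum h₀]
      calc sSup ((fun v : X →L[ℝ] ℝ => v h₀) '' A) + sInf ((fun v : X →L[ℝ] ℝ => v h₀) '' B)
          ≤ (s - w h₀) + w h₀ := add_le_add hsupA (hBle h₀)
        _ = s := by ring
    linarith [hlow h₀, hs2]
  refine ⟨key, ?_⟩
  -- metric regularity
  refine ⟨r / (K + 3), by positivity, ?_⟩
  intro x hx y hy
  have hr' : r / (K + 3) ≤ r := by
    rw [div_le_iff₀ (by positivity)]
    nlinarith
  have hxr : ‖x - xb‖ ≤ r := hx.trans hr'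
  have hyr : dist y yb ≤ r := hy.trans hr'
  by_cases hcase : ENNReal.ofReal K * EMetric.infEdist y (F x) < ENNReal.ofReal (r - ‖x - xb‖)
  · exact key x hxr y hyr hcase
  push_neg at hcase
  by_cases htop : EMetric.infEdist y (F x) = ⊤
  · rw [htop, ENNReal.mul_top (ENNReal.ofReal_pos.2 hK).ne']
    exact le_top
  -- distance to F xb small
  have hxb_key : EMetric.infEdist xb {x' : X | y ∈ F x'} ≤
      ENNReal.ofReal K * EMetric.infEdist y (F xb) := by
    refine key xb (by simp [hr.le]) y hyr ?_
    calc ENNReal.ofReal K * EMetric.infEdist y (F xb)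
        ≤ ENNReal.ofReal K * edist y yb := by
          gcongr; exact EMetric.infEdist_le_edist_of_mem hgraph
      _ ≤ ENNReal.ofReal K * ENNReal.ofReal (r / (K + 3)) := by
          gcongr; rw [edist_dist]; exact ENNReal.ofReal_le_ofReal hy
      _ = ENNReal.ofReal (K * (r / (K + 3))) := (ENNReal.ofReal_mul hK.le).symm
      _ < ENNReal.ofReal (r - ‖xb - xb‖) := by
          rw [ENNReal.ofReal_lt_ofReal_iff (by simpa using hr)]
          have hKr : K * (r / (K + 3)) < r := by
            rw [mul_comm, div_mul_eq_mul_div, div_lt_iff₀ (by positivity)]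
            nlinarith
          simpa using hKr
  calc EMetric.infEdist x {x' : X | y ∈ F x'}
      ≤ edist x xb + EMetric.infEdist xb {x' : X | y ∈ F x'} :=
        EMetric.infEdist_le_edist_add_infEdist
    _ ≤ ENNReal.ofReal (r / (K + 3)) + ENNReal.ofReal (K * (r / (K + 3))) := by
        gcongr
        · rw [edist_dist, dist_eq_norm]; exact ENNReal.ofReal_le_ofReal hx
        · calc EMetric.infEdist xb {x' : X | y ∈ F x'}
              ≤ ENNReal.ofReal K * EMetric.infEdist y (F xb) := hxb_key
            _ ≤ ENNReal.ofReal K * ENNReal.ofReal (r / (K + 3)) := by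
                gcongr
                calc EMetric.infEdist y (F xb) ≤ edist y yb :=
                      EMetric.infEdist_le_edist_of_mem hgraph
                  _ ≤ ENNReal.ofReal (r / (K + 3)) := by
                      rw [edist_dist]; exact ENNReal.ofReal_le_ofReal hy
            _ = ENNReal.ofReal (K * (r / (K + 3))) := (ENNReal.ofReal_mul hK.le).symm
    _ = ENNReal.ofReal (r / (K + 3) + K * (r / (K + 3))) :=
        (ENNReal.ofReal_add (by positivity) (by positivity)).symm
    _ ≤ ENNReal.ofReal (r - ‖x - xb‖) := by
        apply ENNReal.ofReal_le_ofReal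
        have hreq : r = (r / (K + 3)) * (K + 3) := by field_simp
        nlinarith [hx, hr, hK]
    _ ≤ ENNReal.ofReal K * EMetric.infEdist y (F x) := hcase
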